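/- For τ > 0 set τ̲ := (√(1+4τ) − 1)/2, τ̄ := (√(1+4τ) + 1)/2, and define s_τ := ∫_{τ̲}^{τ̄} dζ / √( ζ² − (ζ² − τ)² ). Then there exist constants C > 0 and τ₀ ∈ (0,1) such that for all τ ∈ (0, τ₀), | s_τ + log τ | ≤ C; that is, s_τ = −log τ + O(1) as τ → 0. -/

import Mathlib

set_option maxHeartbeats 2000000
open Real MeasureTheory Set intervalIntegral

lemma int_inv_sqrt_sub (a c : ℝ) :
    IntervalIntegrable (fun x => (x - a) ^ (-(1/2) : ℝ)) volume a c := by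
  have h := intervalIntegral.intervalIntegrable_rpow' (a := 0) (b := c - a)
    (r := -(1/2)) (by norm_num)
  simpa using h.comp_sub_right a

lemma int_inv_sqrt_sub' (b c : ℝ) :
    IntervalIntegrable (fun x => (b - x) ^ (-(1/2) : ℝ)) volume c b := by
  have h := intervalIntegral.intervalIntegrable_rpow' (a := 0) (b := b - c)
    (r := -(1/2)) (by norm_num)
  simpa using (h.comp_sub_left b).symm

lemma rpow_neg_half_eq (x : ℝ) (hx : 0 ≤ x) :
    x ^ (-(1/2) : ℝ) = 1 / Real.sqrt x := by
  rw [Real.rpow_neg hx, Real.sqrt_eq_rpow]; exact (one_div _).symm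


private lemma pointwise_low (a ζ : ℝ) (ha : 0 < a) (hlt : a < ζ) (h2 : ζ ≤ 3/4) :
    (1 / Real.sqrt ((a+1) ^ 2 - a ^ 2)) * (1 / Real.sqrt (ζ ^ 2 - a ^ 2))
      ≤ 1 / Real.sqrt ((ζ ^ 2 - a ^ 2) * ((a+1) ^ 2 - ζ ^ 2)) := by
  have hpos1 : 0 < ζ ^ 2 - a ^ 2 := by nlinarith
  have hpos2 : 0 < (a+1) ^ 2 - ζ ^ 2 := by nlinarith
  have hpos3 : 0 < (a+1) ^ 2 - a ^ 2 := by nlinarith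
  have hu0 : 0 < Real.sqrt (ζ ^ 2 - a ^ 2) := Real.sqrt_pos.mpr hpos1
  have hw0 : 0 < Real.sqrt ((a+1) ^ 2 - a ^ 2) := Real.sqrt_pos.mpr hpos3
  have hrw : (1 / Real.sqrt ((a+1) ^ 2 - a ^ 2)) * (1 / Real.sqrt (ζ ^ 2 - a ^ 2))
      = 1 / Real.sqrt ((ζ ^ 2 - a ^ 2) * ((a+1) ^ 2 - a ^ 2)) := by
    rw [Real.sqrt_mul hpos1.le]
    field_simp
  rw [hrw]
  apply one_div_le_one_div_of_le (Real.sqrt_pos.mpr (by positivity))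
  apply Real.sqrt_le_sqrt
  nlinarith [sq_nonneg (ζ ^ 2 - a ^ 2)]

private lemma pointwise_up (a ζ : ℝ) (ha : 0 < a) (ha100 : a < 1/100)
    (hlt : a < ζ) (h2 : ζ ≤ 3/4) :
    1 / Real.sqrt ((ζ ^ 2 - a ^ 2) * ((a+1) ^ 2 - ζ ^ 2))
      ≤ (1 / Real.sqrt ((a+1) ^ 2 - a ^ 2)) * (1 / Real.sqrt (ζ ^ 2 - a ^ 2)) + 2 := by
  have hpos1 : 0 < ζ ^ 2 - a ^ 2 := by nlinarith
  have hpos2 : 0 < (a+1) ^ 2 - ζ ^ 2 := by nlinarith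
  have hpos3 : 0 < (a+1) ^ 2 - a ^ 2 := by nlinarith
  have hu0 : 0 < Real.sqrt (ζ ^ 2 - a ^ 2) := Real.sqrt_pos.mpr hpos1
  have hv0 : 0 < Real.sqrt ((a+1) ^ 2 - ζ ^ 2) := Real.sqrt_pos.mpr hpos2
  have hw0 : 0 < Real.sqrt ((a+1) ^ 2 - a ^ 2) := Real.sqrt_pos.mpr hpos3
  have hu2 : Real.sqrt (ζ ^ 2 - a ^ 2) ^ 2 = ζ ^ 2 - a ^ 2 := Real.sq_sqrt hpos1.le
  have hv2 : Real.sqrt ((a+1) ^ 2 - ζ ^ 2) ^ 2 = (a+1) ^ 2 - ζ ^ 2 := Real.sq_sqrt hpos2.le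
  have hw2 : Real.sqrt ((a+1) ^ 2 - a ^ 2) ^ 2 = (a+1) ^ 2 - a ^ 2 := Real.sq_sqrt hpos3.le
  have hu34 : Real.sqrt (ζ ^ 2 - a ^ 2) ≤ 3/4 := by
    have harg : ζ ^ 2 - a ^ 2 ≤ (3/4:ℝ) ^ 2 := by nlinarith
    have h := Real.sqrt_le_sqrt harg
    rwa [Real.sqrt_sq (by norm_num : (0:ℝ) ≤ 3/4)] at h
  have hv12 : (1:ℝ)/2 ≤ Real.sqrt ((a+1) ^ 2 - ζ ^ 2) := by
    have harg : ((1:ℝ)/2) ^ 2 ≤ (a+1) ^ 2 - ζ ^ 2 := by nlinarith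
    have h := Real.sqrt_le_sqrt harg
    rwa [Real.sqrt_sq (by norm_num : (0:ℝ) ≤ 1/2)] at h
  have hw1 : (1:ℝ) ≤ Real.sqrt ((a+1) ^ 2 - a ^ 2) := by
    have h := Real.sqrt_le_sqrt (show (1:ℝ) ≤ (a+1) ^ 2 - a ^ 2 by nlinarith)
    rwa [Real.sqrt_one] at h
  have hvw : Real.sqrt ((a+1) ^ 2 - ζ ^ 2) ≤ Real.sqrt ((a+1) ^ 2 - a ^ 2) := by
    apply Real.sqrt_le_sqrt; nlinarith
  rw [Real.sqrt_mul hpos1.le]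
  set u := Real.sqrt (ζ ^ 2 - a ^ 2)
  set v := Real.sqrt ((a+1) ^ 2 - ζ ^ 2)
  set w := Real.sqrt ((a+1) ^ 2 - a ^ 2)
  have hrel : w ^ 2 = v ^ 2 + u ^ 2 := by rw [hu2, hv2, hw2]; ring
  have hkey : 1 / (u * v) - 1 / w * (1 / u) = (w - v) / (u * v * w) := by
    field_simp
  have hwv : w - v ≤ u ^ 2 := by
    nlinarith [mul_nonneg (sub_nonneg.mpr hvw) (by linarith : (0:ℝ) ≤ w + v - 1)]
  have hfin : (w - v) / (u * v * w) ≤ 2 := by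
    rw [div_le_iff₀ (by positivity)]
    have h5 : (1:ℝ)/2 * 1 ≤ v * w := mul_le_mul hv12 hw1 zero_le_one hv0.le
    have h6 : u * (1/2) ≤ u * (v * w) := by
      apply mul_le_mul_of_nonneg_left _ hu0.le; linarith
    have h7 : u * u ≤ u * (3/4) := mul_le_mul_of_nonneg_left hu34 hu0.le
    nlinarith [h6, h7, hwv, hu0]
  linarith [hkey, hfin]

private lemma pointwise_right (a ζ : ℝ) (ha : 0 < a) (ha100 : a < 1/100)
    (h1 : 3/4 ≤ ζ) (h2 : ζ < a + 1) :
    1 / Real.sqrt ((ζ ^ 2 - a ^ 2) * ((a+1) ^ 2 - ζ ^ 2))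
      ≤ Real.sqrt 2 * (1 / Real.sqrt ((a+1) ^ 2 - ζ ^ 2)) := by
  have hpos : 0 < (a+1) ^ 2 - ζ ^ 2 := by nlinarith
  have e1 : (1:ℝ)/2 ≤ ζ ^ 2 - a ^ 2 := by nlinarith
  have hP : (1/2) * ((a+1) ^ 2 - ζ ^ 2) ≤ (ζ ^ 2 - a ^ 2) * ((a+1) ^ 2 - ζ ^ 2) := by
    nlinarith [mul_nonneg hpos.le (show (0:ℝ) ≤ ζ ^ 2 - a ^ 2 - 1/2 by linarith)]
  calc 1 / Real.sqrt ((ζ ^ 2 - a ^ 2) * ((a+1) ^ 2 - ζ ^ 2))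
      ≤ 1 / Real.sqrt ((1/2) * ((a+1) ^ 2 - ζ ^ 2)) :=
        one_div_le_one_div_of_le (Real.sqrt_pos.mpr (by positivity))
          (Real.sqrt_le_sqrt hP)
    _ = Real.sqrt 2 * (1 / Real.sqrt ((a+1) ^ 2 - ζ ^ 2)) := by
        rw [Real.sqrt_mul (by norm_num : (0:ℝ) ≤ 1/2)]
        rw [show Real.sqrt ((1:ℝ)/2) = 1 / Real.sqrt 2 by
          rw [one_div, Real.sqrt_inv]; exact (one_div _).symm]
        have hs2 : (0:ℝ) < Real.sqrt 2 := Real.sqrt_pos.mpr (by norm_num)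
        have hv : 0 < Real.sqrt ((a+1) ^ 2 - ζ ^ 2) := Real.sqrt_pos.mpr hpos
        field_simp

private lemma coeff_bound (a τ : ℝ) (ha : 0 < a) (haτ : a ≤ τ) (hτ2a : τ ≤ 2 * a)
    (hτ1 : τ < 1/100) :
    (1 - 1 / Real.sqrt ((a+1) ^ 2 - a ^ 2)) * (-Real.log a) ≤ 3 := by
  have hτ0 : 0 < τ := lt_of_lt_of_le ha haτ
  have hpos3 : (1:ℝ) ≤ (a+1) ^ 2 - a ^ 2 := by nlinarith
  have hw1 : (1:ℝ) ≤ Real.sqrt ((a+1) ^ 2 - a ^ 2) := by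
    have h := Real.sqrt_le_sqrt hpos3
    rwa [Real.sqrt_one] at h
  have hwpos : 0 < Real.sqrt ((a+1) ^ 2 - a ^ 2) := lt_of_lt_of_le one_pos hw1
  have hwsq : Real.sqrt ((a+1) ^ 2 - a ^ 2) ^ 2 = 2 * a + 1 := by
    rw [Real.sq_sqrt (by nlinarith : (0:ℝ) ≤ (a+1) ^ 2 - a ^ 2)]; ring
  have hWle : Real.sqrt ((a+1) ^ 2 - a ^ 2) ≤ 1 + a := by
    nlinarith [hwsq, hwpos, sq_nonneg a, sq_nonneg (Real.sqrt ((a+1) ^ 2 - a ^ 2) - (1 + a))]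
  have h1a : (0:ℝ) < 1 + a := by linarith
  have h1W : 1/(1 + a) ≤ 1 / Real.sqrt ((a+1) ^ 2 - a ^ 2) :=
    one_div_le_one_div_of_le hwpos hWle
  have hkey : (1:ℝ) - a ≤ 1/(1 + a) := by
    rw [le_div_iff₀ h1a]; nlinarith [sq_nonneg a]
  have h1c : 1 - 1 / Real.sqrt ((a+1) ^ 2 - a ^ 2) ≤ 2 * τ := by linarith
  have hnegLa : -Real.log a ≤ 1 + 1/τ := by
    have h1 : Real.log (τ/2) ≤ Real.log a := by
      apply Real.log_le_log (by positivity); linarith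
    have h2 : Real.log (τ/2) = Real.log τ - Real.log 2 :=
      Real.log_div hτ0.ne' (by norm_num)
    have h4 := Real.log_le_sub_one_of_pos (show (0:ℝ) < τ⁻¹ by positivity)
    rw [Real.log_inv] at h4
    have h5 : τ⁻¹ = 1/τ := (one_div τ).symm
    rw [h5] at h4
    have hlog2 : Real.log 2 ≤ 1 := by
      have h := Real.log_le_sub_one_of_pos (show (0:ℝ) < 2 by norm_num); linarith
    linarith
  have hLa : Real.log a < 0 := Real.log_neg ha (by linarith)
  have hm := mul_le_mul h1c hnegLa (by linarith) (by positivity)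
  have he : 2*τ*(1 + 1/τ) = 2*τ + 2 := by field_simp
  rw [he] at hm
  linarith

private lemma final_arith (I c₀ K La Lb : ℝ) (hc0 : 0 < c₀) (hc1 : c₀ ≤ 1)
    (hK0 : 0 ≤ K) (hK1 : K ≤ 1/2) (hLa : La < 0) (hLb0 : 0 ≤ Lb) (hLb1 : Lb ≤ 1)
    (hprod : (1 - c₀) * (-La) ≤ 3) (hIl : c₀ * (K - La) ≤ I)
    (hIu : I ≤ c₀ * (K - La) + 5) : |I + (La + Lb)| ≤ 100 := by
  have hre : c₀ * (K - La) + La = c₀ * K - (1 - c₀) * (-La) := by ring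
  have hcK0 : 0 ≤ c₀ * K := mul_nonneg hc0.le hK0
  have hcK1 : c₀ * K ≤ 1/2 := by nlinarith
  have hprod0 : 0 ≤ (1 - c₀) * (-La) := mul_nonneg (by linarith) (by linarith)
  rw [abs_le]
  constructor <;> linarith

lemma delaunay_aux (a : ℝ) (ha : 0 < a) (hsm : a * (a + 1) < 1/100) :
    |(∫ ζ in a..(a + 1),
        1 / Real.sqrt (ζ ^ 2 - (ζ ^ 2 - a * (a + 1)) ^ 2)) + Real.log (a * (a + 1))| ≤ 100 := by
  set τ : ℝ := a * (a + 1) with hτ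
  set b : ℝ := a + 1 with hb
  have hτ0 : 0 < τ := by positivity
  have haτ : a ≤ τ := by nlinarith
  have hτ2a : τ ≤ 2 * a := by nlinarith
  have ha100 : a < 1/100 := lt_of_le_of_lt haτ hsm
  have ha2 : a ^ 2 < 1/10000 := by nlinarith [mul_pos (show (0:ℝ) < 1/100 - a by linarith) (show (0:ℝ) < 1/100 + a by linarith)]
  have hb1 : (1:ℝ) < b := by rw [hb]; linarith
  have hb2 : b < 2 := by rw [hb]; linarith
  have ha34 : a < 3/4 := by linarith
  have h34b : (3:ℝ)/4 < b := by linarith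
  -- the integrand rewritten
  have key : ∀ ζ : ℝ, ζ ^ 2 - (ζ ^ 2 - τ) ^ 2 = (ζ ^ 2 - a ^ 2) * (b ^ 2 - ζ ^ 2) := by
    intro ζ; rw [hτ, hb]; ring
  set f : ℝ → ℝ := fun ζ => 1 / Real.sqrt ((ζ ^ 2 - a ^ 2) * (b ^ 2 - ζ ^ 2)) with hf
  have hI : (∫ ζ in a..b, 1 / Real.sqrt (ζ ^ 2 - (ζ ^ 2 - τ) ^ 2)) = ∫ ζ in a..b, f ζ := by
    apply intervalIntegral.integral_congr
    intro ζ _; rw [hf]; simp only; rw [key ζ]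
  rw [hI]
  -- measurability
  have hmf : Measurable f := by
    rw [hf]
    exact measurable_const.div ((Real.continuous_sqrt.comp (by continuity)).measurable)
  -- integrability on [a, 3/4]
  have hint1 : IntervalIntegrable f volume a (3/4) := by
    apply IntervalIntegrable.mono_fun'
      (g := fun ζ => (1 / Real.sqrt (7 * a / 8)) * (ζ - a) ^ (-(1/2) : ℝ))
    · exact (int_inv_sqrt_sub a (3/4)).const_mul _
    · exact hmf.aestronglyMeasurable
    · rw [uIoc_of_le ha34.le]
      filter_upwards [ae_restrict_mem measurableSet_Ioc] with ζ hζ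
      obtain ⟨hζ1, hζ2⟩ := hζ
      have h0 : (0:ℝ) < ζ - a := by linarith
      have e1 : (ζ - a) * (2 * a) ≤ ζ ^ 2 - a ^ 2 := by nlinarith
      have e2 : (7:ℝ)/16 ≤ b ^ 2 - ζ ^ 2 := by nlinarith
      have hP : (7 * a / 8) * (ζ - a) ≤ (ζ ^ 2 - a ^ 2) * (b ^ 2 - ζ ^ 2) := by
        nlinarith [mul_nonneg (mul_nonneg h0.le (by linarith : (0:ℝ) ≤ 2 * a)) (by linarith : (0:ℝ) ≤ b ^ 2 - ζ ^ 2 - 7/16)]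
      have hnorm : ‖f ζ‖ = f ζ := by
        rw [Real.norm_eq_abs, abs_of_nonneg]; positivity
      rw [hnorm, rpow_neg_half_eq _ h0.le]
      have hc : (0:ℝ) < 7 * a / 8 := by linarith
      calc f ζ ≤ 1 / Real.sqrt ((7 * a / 8) * (ζ - a)) := by
            apply one_div_le_one_div_of_le
            · exact Real.sqrt_pos.mpr (by positivity)
            · exact Real.sqrt_le_sqrt hP
        _ = (1 / Real.sqrt (7 * a / 8)) * (1 / Real.sqrt (ζ - a)) := by
            rw [Real.sqrt_mul hc.le]; simp [one_div, mul_inv]; ring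

  -- integrability on [3/4, b]
  have hint2 : IntervalIntegrable f volume (3/4) b := by
    apply IntervalIntegrable.mono_fun'
      (g := fun ζ => (1 / Real.sqrt ((7:ℝ)/8)) * (b - ζ) ^ (-(1/2) : ℝ))
    · exact (int_inv_sqrt_sub' b (3/4)).const_mul _
    · exact hmf.aestronglyMeasurable
    · rw [uIoc_of_le h34b.le]
      filter_upwards [ae_restrict_mem measurableSet_Ioc] with ζ hζ
      obtain ⟨hζ1, hζ2⟩ := hζ
      have hnorm : ‖f ζ‖ = f ζ := by
        rw [Real.norm_eq_abs, abs_of_nonneg]; positivity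
      have h0 : (0:ℝ) ≤ b - ζ := by linarith
      rw [hnorm, rpow_neg_half_eq _ h0]
      rcases eq_or_lt_of_le hζ2 with heq | hζb
      · subst heq; rw [hf]; simp
      · have h0' : (0:ℝ) < b - ζ := by linarith
        have e1 : (1:ℝ)/2 ≤ ζ ^ 2 - a ^ 2 := by
          nlinarith [ha2, mul_nonneg (show (0:ℝ) ≤ ζ - 3/4 by linarith)
            (show (0:ℝ) ≤ ζ + 3/4 by linarith)]
        have e2 : (7/4) * (b - ζ) ≤ b ^ 2 - ζ ^ 2 := by
          nlinarith [mul_nonneg (show (0:ℝ) ≤ b - ζ by linarith)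
            (show (0:ℝ) ≤ b + ζ - 7/4 by linarith)]
        have e0 : (0:ℝ) ≤ b ^ 2 - ζ ^ 2 := by
          nlinarith [mul_nonneg (show (0:ℝ) ≤ b - ζ by linarith)
            (show (0:ℝ) ≤ b + ζ by linarith)]
        have hP : (7/8) * (b - ζ) ≤ (ζ ^ 2 - a ^ 2) * (b ^ 2 - ζ ^ 2) := by
          nlinarith [mul_nonneg e0 (by linarith : (0:ℝ) ≤ ζ ^ 2 - a ^ 2 - 1/2)]
        calc f ζ ≤ 1 / Real.sqrt ((7/8) * (b - ζ)) :=
              one_div_le_one_div_of_le (Real.sqrt_pos.mpr (by positivity))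
                (Real.sqrt_le_sqrt hP)
          _ = (1 / Real.sqrt ((7:ℝ)/8)) * (1 / Real.sqrt (b - ζ)) := by
              rw [Real.sqrt_mul (by norm_num : (0:ℝ) ≤ 7/8)]
              simp [one_div, mul_inv]; ring
  -- integrability of p on [a, 3/4]
  set p : ℝ → ℝ := fun ζ => 1 / Real.sqrt (ζ ^ 2 - a ^ 2) with hp
  have hmp : Measurable p := by
    rw [hp]
    exact measurable_const.div ((Real.continuous_sqrt.comp (by continuity)).measurable)
  have hp_int : IntervalIntegrable p volume a (3/4) := by
    apply IntervalIntegrable.mono_fun'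
      (g := fun ζ => (1 / Real.sqrt (2 * a)) * (ζ - a) ^ (-(1/2) : ℝ))
    · exact (int_inv_sqrt_sub a (3/4)).const_mul _
    · exact hmp.aestronglyMeasurable
    · rw [uIoc_of_le ha34.le]
      filter_upwards [ae_restrict_mem measurableSet_Ioc] with ζ hζ
      obtain ⟨hζ1, hζ2⟩ := hζ
      have h0 : (0:ℝ) < ζ - a := by linarith
      have hP : (2 * a) * (ζ - a) ≤ ζ ^ 2 - a ^ 2 := by nlinarith
      have hnorm : ‖p ζ‖ = p ζ := by
        rw [Real.norm_eq_abs, abs_of_nonneg]; positivity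
      rw [hnorm, rpow_neg_half_eq _ h0.le]
      calc p ζ ≤ 1 / Real.sqrt ((2 * a) * (ζ - a)) :=
            one_div_le_one_div_of_le (Real.sqrt_pos.mpr (by positivity))
              (Real.sqrt_le_sqrt hP)
        _ = (1 / Real.sqrt (2 * a)) * (1 / Real.sqrt (ζ - a)) := by
            rw [Real.sqrt_mul (by positivity : (0:ℝ) ≤ 2 * a)]
            simp [one_div, mul_inv]; ring
  -- FTC for p
  set K : ℝ := Real.log (3/4 + Real.sqrt ((3/4:ℝ) ^ 2 - a ^ 2)) with hK
  have hpval : (∫ ζ in a..(3/4), p ζ) = K - Real.log a := by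
    have hcont : ContinuousOn (fun x : ℝ => Real.log (x + Real.sqrt (x ^ 2 - a ^ 2)))
        (Icc a (3/4)) := by
      apply ContinuousOn.log
      · exact (continuous_id.add (Real.continuous_sqrt.comp (by continuity))).continuousOn
      · intro x hx
        exact ne_of_gt (by nlinarith [Real.sqrt_nonneg (x ^ 2 - a ^ 2), hx.1])
    have hderiv : ∀ x ∈ Ioo a (3/4),
        HasDerivAt (fun x : ℝ => Real.log (x + Real.sqrt (x ^ 2 - a ^ 2))) (p x) x := by
      intro x hx
      have hxa : a < x := hx.1
      have hpos : 0 < x ^ 2 - a ^ 2 := by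
        nlinarith [mul_pos (show (0:ℝ) < x - a by linarith)
          (show (0:ℝ) < x + a by linarith)]
      have hw0 : 0 < Real.sqrt (x ^ 2 - a ^ 2) := Real.sqrt_pos.mpr hpos
      have h1 : HasDerivAt (fun y : ℝ => y ^ 2 - a ^ 2) (2 * x) x := by
        simpa using (hasDerivAt_pow 2 x).sub_const (a ^ 2)
      have h2 := h1.sqrt hpos.ne'
      have h3 := (hasDerivAt_id x).add h2
      have hne2 : x + Real.sqrt (x ^ 2 - a ^ 2) ≠ 0 := ne_of_gt (by linarith)
      have h4 := h3.log hne2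
      convert h4 using 1 <;> try rfl
      rw [hp]; simp only [Pi.add_apply, id]
      have hne1 : Real.sqrt (x ^ 2 - a ^ 2) ≠ 0 := hw0.ne'
      field_simp
      ring
    rw [intervalIntegral.integral_eq_sub_of_hasDerivAt_of_le ha34.le hcont hderiv hp_int]
    rw [hK]
    have hz : a ^ 2 - a ^ 2 = 0 := sub_self _
    rw [hz, Real.sqrt_zero, add_zero]
  -- the constant c₀ and q
  set c₀ : ℝ := 1 / Real.sqrt (b ^ 2 - a ^ 2) with hc₀
  have hwge1 : 1 ≤ Real.sqrt (b ^ 2 - a ^ 2) := by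
    have := Real.sqrt_le_sqrt (show (1:ℝ) ≤ b ^ 2 - a ^ 2 by rw [hb]; nlinarith)
    rwa [Real.sqrt_one] at this
  have hwpos : 0 < Real.sqrt (b ^ 2 - a ^ 2) := lt_of_lt_of_le one_pos hwge1
  have hwsq : Real.sqrt (b ^ 2 - a ^ 2) ^ 2 = b ^ 2 - a ^ 2 :=
    Real.sq_sqrt (by rw [hb]; nlinarith)
  have hc₀pos : 0 < c₀ := by rw [hc₀]; positivity
  have hc₀le1 : c₀ ≤ 1 := by
    rw [hc₀, div_le_one hwpos]; exact hwge1
  set q : ℝ → ℝ := fun ζ => c₀ * p ζ with hq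
  have hq_int : IntervalIntegrable q volume a (3/4) := hp_int.const_mul _
  have hqval : (∫ ζ in a..(3/4), q ζ) = c₀ * (K - Real.log a) := by
    rw [hq]; simp only
    rw [intervalIntegral.integral_const_mul, hpval]
  -- pointwise q ≤ f, lower bound
  have hlow : (∫ ζ in a..(3/4), q ζ) ≤ ∫ ζ in a..(3/4), f ζ := by
    apply intervalIntegral.integral_mono_on ha34.le hq_int hint1
    intro ζ hζ; obtain ⟨h1, h2⟩ := hζ
    rcases eq_or_lt_of_le h1 with heq | hlt
    · rw [hq, hp, hf, ← heq]; simp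
    · rw [hq, hp, hf, hc₀]; simp only
      rw [hb]
      exact pointwise_low a ζ ha hlt h2
  -- pointwise f ≤ q + 2, upper bound on [a, 3/4]
  have hup1 : (∫ ζ in a..(3/4), f ζ) ≤ c₀ * (K - Real.log a) + 2 * (3/4 - a) := by
    have hmono : (∫ ζ in a..(3/4), f ζ) ≤ ∫ ζ in a..(3/4), (q ζ + 2) := by
      apply intervalIntegral.integral_mono_on ha34.le hint1
        (hq_int.add intervalIntegrable_const)
      intro ζ hζ; obtain ⟨h1, h2⟩ := hζ
      rcases eq_or_lt_of_le h1 with heq | hlt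
      · rw [hq, hp, hf, ← heq]; simp
      · rw [hq, hp, hf, hc₀]; simp only
        rw [hb]
        exact pointwise_up a ζ ha ha100 hlt h2
    have hq2val : (∫ ζ in a..(3/4), (q ζ + 2)) = c₀ * (K - Real.log a) + 2 * (3/4 - a) := by
      rw [intervalIntegral.integral_add hq_int intervalIntegrable_const,
        intervalIntegral.integral_const, hqval]
      simp [smul_eq_mul]; ring
    linarith [hmono, hq2val.le, hq2val.ge]
  -- upper bound on [3/4, b] via arcsin
  set r : ℝ → ℝ := fun ζ => 1 / Real.sqrt (b ^ 2 - ζ ^ 2) with hr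
  have hmr : Measurable r := by
    rw [hr]
    exact measurable_const.div ((Real.continuous_sqrt.comp (by continuity)).measurable)
  have hr_int : IntervalIntegrable r volume (3/4) b := by
    apply IntervalIntegrable.mono_fun'
      (g := fun ζ => (1 / Real.sqrt ((7:ℝ)/4)) * (b - ζ) ^ (-(1/2) : ℝ))
    · exact (int_inv_sqrt_sub' b (3/4)).const_mul _
    · exact hmr.aestronglyMeasurable
    · rw [uIoc_of_le h34b.le]
      filter_upwards [ae_restrict_mem measurableSet_Ioc] with ζ hζ
      obtain ⟨hζ1, hζ2⟩ := hζ
      have hnorm : ‖r ζ‖ = r ζ := by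
        rw [Real.norm_eq_abs, abs_of_nonneg]; positivity
      have h0 : (0:ℝ) ≤ b - ζ := by linarith
      rw [hnorm, rpow_neg_half_eq _ h0]
      rcases eq_or_lt_of_le hζ2 with heq | hζb
      · subst heq; rw [hr]; simp
      · have hP : (7/4) * (b - ζ) ≤ b ^ 2 - ζ ^ 2 := by
          nlinarith [mul_nonneg (show (0:ℝ) ≤ b - ζ by linarith)
            (show (0:ℝ) ≤ b + ζ - 7/4 by linarith)]
        calc r ζ ≤ 1 / Real.sqrt ((7/4) * (b - ζ)) :=
              one_div_le_one_div_of_le (Real.sqrt_pos.mpr (by nlinarith [hζb]))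
                (Real.sqrt_le_sqrt hP)
          _ = (1 / Real.sqrt ((7:ℝ)/4)) * (1 / Real.sqrt (b - ζ)) := by
              rw [Real.sqrt_mul (by norm_num : (0:ℝ) ≤ 7/4)]
              simp [one_div, mul_inv]; ring
  have hb0 : (0:ℝ) < b := by linarith
  have hrval : (∫ ζ in (3/4:ℝ)..b, r ζ) = Real.arcsin (b / b) - Real.arcsin (3/4 / b) := by
    have hcont : ContinuousOn (fun x : ℝ => Real.arcsin (x / b)) (Icc (3/4) b) :=
      (Real.continuous_arcsin.comp (continuous_id.div_const b)).continuousOn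
    have hderiv : ∀ x ∈ Ioo (3/4:ℝ) b, HasDerivAt (fun y : ℝ => Real.arcsin (y / b)) (r x) x := by
      intro x hx
      have hx1 : (0:ℝ) < x := by linarith [hx.1]
      have hxb : x < b := hx.2
      have hq0 : 0 < x / b := by positivity
      have h1 : x / b ≠ -1 := by intro h; rw [h] at hq0; norm_num at hq0
      have h2 : x / b ≠ 1 := ne_of_lt ((div_lt_one hb0).mpr hxb)
      have hd := (Real.hasDerivAt_arcsin h1 h2).comp x ((hasDerivAt_id x).div_const b)
      convert hd using 1 <;> try rfl
      have hpos : 0 < b ^ 2 - x ^ 2 := by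
        nlinarith [mul_pos (show (0:ℝ) < b - x by linarith)
          (show (0:ℝ) < b + x by linarith)]
      have e : 1 - (x / b) ^ 2 = (b ^ 2 - x ^ 2) / b ^ 2 := by field_simp
      rw [hr]; simp only
      rw [e, Real.sqrt_div hpos.le, Real.sqrt_sq hb0.le]
      have hv : 0 < Real.sqrt (b ^ 2 - x ^ 2) := Real.sqrt_pos.mpr hpos
      field_simp
    rw [intervalIntegral.integral_eq_sub_of_hasDerivAt_of_le h34b.le hcont hderiv hr_int]
  have hr_le : (∫ ζ in (3/4:ℝ)..b, r ζ) ≤ 2 := by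
    rw [hrval, div_self hb0.ne', Real.arcsin_one]
    have h1 : 0 ≤ Real.arcsin (3/4 / b) := Real.arcsin_nonneg.mpr (by positivity)
    have h2 : π ≤ 4 := Real.pi_le_four
    linarith
  have hup2 : (∫ ζ in (3/4:ℝ)..b, f ζ) ≤ 3 := by
    have hmono : (∫ ζ in (3/4:ℝ)..b, f ζ) ≤ ∫ ζ in (3/4:ℝ)..b, Real.sqrt 2 * r ζ := by
      apply intervalIntegral.integral_mono_on h34b.le hint2 (hr_int.const_mul _)
      intro ζ hζ; obtain ⟨h1, h2⟩ := hζ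
      rcases eq_or_lt_of_le h2 with heq | hlt
      · subst heq; rw [hf, hr]; simp
      · rw [hf, hr]; simp only
        rw [hb]
        exact pointwise_right a ζ ha ha100 h1 (by rw [hb] at hlt; exact hlt)
    have hcm : (∫ ζ in (3/4:ℝ)..b, Real.sqrt 2 * r ζ)
        = Real.sqrt 2 * ∫ ζ in (3/4:ℝ)..b, r ζ := intervalIntegral.integral_const_mul _ _
    have hrnn : 0 ≤ ∫ ζ in (3/4:ℝ)..b, r ζ :=
      intervalIntegral.integral_nonneg h34b.le
        (fun u hu => div_nonneg zero_le_one (Real.sqrt_nonneg _))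
    have hs2 : Real.sqrt 2 ≤ 3/2 := by
      nlinarith [Real.sq_sqrt (show (0:ℝ) ≤ 2 by norm_num), Real.sqrt_nonneg 2]
    have hs2nn : (0:ℝ) ≤ Real.sqrt 2 := Real.sqrt_nonneg 2
    rw [hcm] at hmono
    nlinarith [hmono, hr_le, hrnn, hs2, hs2nn]
  -- combine
  have hlow2 : 0 ≤ ∫ ζ in (3/4:ℝ)..b, f ζ :=
    intervalIntegral.integral_nonneg h34b.le
      (fun u hu => div_nonneg zero_le_one (Real.sqrt_nonneg _))
  have hsplit : (∫ ζ in a..b, f ζ)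
      = (∫ ζ in a..(3/4), f ζ) + ∫ ζ in (3/4:ℝ)..b, f ζ :=
    (intervalIntegral.integral_add_adjacent_intervals hint1 hint2).symm
  have hIlow : c₀ * (K - Real.log a) ≤ ∫ ζ in a..b, f ζ := by
    rw [hsplit]; linarith [hlow, hlow2, hqval.ge, hqval.le]
  have hIup : (∫ ζ in a..b, f ζ) ≤ c₀ * (K - Real.log a) + 2 * (3/4 - a) + 3 := by
    rw [hsplit]; linarith [hup1, hup2]
  -- log facts
  have hLa : Real.log a < 0 := Real.log_neg ha (by linarith)
  have hLb0 : 0 ≤ Real.log b := Real.log_nonneg hb1.le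
  have hLb : Real.log b ≤ 1 := by
    have h := Real.log_le_sub_one_of_pos hb0
    linarith
  have hlogτ : Real.log τ = Real.log a + Real.log b := by
    rw [hτ]; exact Real.log_mul ha.ne' (by linarith)
  -- K bounds
  have hsq34 : Real.sqrt ((3/4:ℝ) ^ 2 - a ^ 2) ≤ 3/4 := by
    have h := Real.sqrt_le_sqrt (show (3/4:ℝ) ^ 2 - a ^ 2 ≤ (3/4:ℝ) ^ 2 by nlinarith)
    rwa [Real.sqrt_sq (by norm_num : (0:ℝ) ≤ 3/4)] at h
  have hK1 : K ≤ 1/2 := by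
    have h2 : K ≤ Real.log (3/2) := by
      rw [hK]
      apply Real.log_le_log (by positivity)
      linarith
    have h3 : Real.log (3/2) ≤ 1/2 := by
      have h := Real.log_le_sub_one_of_pos (show (0:ℝ) < 3/2 by norm_num); linarith
    linarith
  have hK0 : 0 ≤ K := by
    rw [hK]; apply Real.log_nonneg
    have h : (1/2:ℝ) ≤ Real.sqrt ((3/4:ℝ) ^ 2 - a ^ 2) := by
      have hh := Real.sqrt_le_sqrt (show ((1:ℝ)/2) ^ 2 ≤ (3/4:ℝ) ^ 2 - a ^ 2 by nlinarith)
      rwa [Real.sqrt_sq (by norm_num : (0:ℝ) ≤ 1/2)] at hh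
    linarith
  have hprod : (1 - c₀) * (-Real.log a) ≤ 3 := by
    have h := coeff_bound a τ ha haτ hτ2a hsm
    rw [← hb] at h
    rw [hc₀]
    exact h
  rw [hlogτ]
  exact final_arith _ c₀ K _ _ hc₀pos hc₀le1 hK0 hK1 hLa hLb0 hLb hprod hIlow
    (by linarith [hIup])
/-- Asymptotics of half of the fundamental period of the Delaunay nodoid profile:
with `τ̲ = (√(1+4τ) − 1)/2` and `τ̄ = (√(1+4τ) + 1)/2`,
`s_τ = ∫_{τ̲}^{τ̄} dζ/√(ζ² − (ζ² − τ)²) = −log τ + O(1)` as `τ → 0`. -/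
theorem delaunay_half_period_asymptotics :
    ∃ C > (0:ℝ), ∃ τ₀ ∈ Set.Ioo (0:ℝ) 1, ∀ τ ∈ Set.Ioo (0:ℝ) τ₀,
      |(∫ ζ in ((Real.sqrt (1 + 4 * τ) - 1) / 2)..((Real.sqrt (1 + 4 * τ) + 1) / 2),
          1 / Real.sqrt (ζ ^ 2 - (ζ ^ 2 - τ) ^ 2))
        + Real.log τ| ≤ C := by
  refine ⟨100, by norm_num, 1/100, by norm_num, ?_⟩
  intro τ hτ
  obtain ⟨hτ0, hτ1⟩ := hτ
  have h14 : (0:ℝ) ≤ 1 + 4 * τ := by linarith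
  have hs2 : Real.sqrt (1 + 4 * τ) ^ 2 = 1 + 4 * τ := Real.sq_sqrt h14
  have hs0 : 0 ≤ Real.sqrt (1 + 4 * τ) := Real.sqrt_nonneg _
  have hs1 : 1 < Real.sqrt (1 + 4 * τ) := by nlinarith
  set A : ℝ := (Real.sqrt (1 + 4 * τ) - 1) / 2 with hA
  have hA0 : 0 < A := by rw [hA]; linarith
  have hA1 : (Real.sqrt (1 + 4 * τ) + 1) / 2 = A + 1 := by rw [hA]; ring
  have hAτ : A * (A + 1) = τ := by rw [hA]; nlinarith [hs2]
  have hAsm : A * (A + 1) < 1/100 := by rw [hAτ]; exact hτ1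
  rw [hA1, show τ = A * (A + 1) from hAτ.symm]
  exact delaunay_aux A hA0 hAsm
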